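/- Let Π be an N×N nonnegative matrix, p̄, e ≥ 0 vectors in ℝ^N, and define Φ(p) = min(Πᵀp + e, p̄) componentwise. Then Φ is monotone (p ≤ q implies Φ(p) ≤ Φ(q)) and maps the order interval [0, p̄] into itself; consequently, by the Knaster–Tarski fixed point theorem, Φ has a greatest fixed point in [0, p̄], and the iteration p⁰ = p̄, p^{k+1} = Φ(p^k) produces a componentwise nonincreasing sequence whose limit is that greatest fixed point. -/

import Mathlib

open Filter

/-- Eisenberg–Noe fixed-point characterization: the map
`Φ(p) = min(Πᵀp + e, p̄)` is monotone and maps `[0, p̄]` into itself; it has a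
greatest fixed point in `[0, p̄]`, and the iteration started at `p̄` is
componentwise nonincreasing and converges to that greatest fixed point. -/
theorem stmt_8 (N : ℕ) (A : Matrix (Fin N) (Fin N) ℝ) (hA : ∀ i j, 0 ≤ A i j)
    (pbar e : Fin N → ℝ) (hpbar : ∀ i, 0 ≤ pbar i) (he : ∀ i, 0 ≤ e i)
    (Phi : (Fin N → ℝ) → (Fin N → ℝ))
    (hPhi : ∀ p i, Phi p i = min (A.transpose.mulVec p i + e i) (pbar i)) :
    (∀ p q : Fin N → ℝ, (∀ i, p i ≤ q i) → ∀ i, Phi p i ≤ Phi q i) ∧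
    (∀ p : Fin N → ℝ, (∀ i, 0 ≤ p i ∧ p i ≤ pbar i) →
      ∀ i, 0 ≤ Phi p i ∧ Phi p i ≤ pbar i) ∧
    (∃ pg : Fin N → ℝ,
      (∀ i, 0 ≤ pg i ∧ pg i ≤ pbar i) ∧ Phi pg = pg ∧
      (∀ q : Fin N → ℝ, (∀ i, 0 ≤ q i ∧ q i ≤ pbar i) → Phi q = q →
        ∀ i, q i ≤ pg i) ∧
      (∀ seq : ℕ → Fin N → ℝ, seq 0 = pbar → (∀ k, seq (k + 1) = Phi (seq k)) →
        (∀ k i, seq (k + 1) i ≤ seq k i) ∧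
        Tendsto seq atTop (nhds pg))) := by
  have hmv : ∀ p i, A.transpose.mulVec p i = ∑ j, A j i * p j := by
    intro p i
    simp [Matrix.mulVec, dotProduct, Matrix.transpose]
  -- monotonicity
  have hmono : ∀ p q : Fin N → ℝ, (∀ i, p i ≤ q i) → ∀ i, Phi p i ≤ Phi q i := by
    intro p q hpq i
    rw [hPhi, hPhi]
    refine min_le_min (add_le_add_left ?_ _) le_rfl
    rw [hmv, hmv]
    exact Finset.sum_le_sum fun j _ => mul_le_mul_of_nonneg_left (hpq j) (hA j i)
  -- invariance
  have hinv : ∀ p : Fin N → ℝ, (∀ i, 0 ≤ p i ∧ p i ≤ pbar i) →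
      ∀ i, 0 ≤ Phi p i ∧ Phi p i ≤ pbar i := by
    intro p hp i
    rw [hPhi]
    refine ⟨le_min (add_nonneg ?_ (he i)) (hpbar i), min_le_right _ _⟩
    rw [hmv]
    exact Finset.sum_nonneg fun j _ => mul_nonneg (hA j i) (hp j).1
  refine ⟨hmono, hinv, ?_⟩
  set s : ℕ → Fin N → ℝ := fun k => Phi^[k] pbar with hs
  have hs0 : s 0 = pbar := rfl
  have hsucc : ∀ k, s (k + 1) = Phi (s k) := fun k =>
    Function.iterate_succ_apply' Phi k pbar
  have hsmem : ∀ k i, 0 ≤ s k i ∧ s k i ≤ pbar i := by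
    intro k
    induction k with
    | zero => exact fun i => ⟨hpbar i, le_rfl⟩
    | succ n ih => rw [hsucc]; exact hinv _ ih
  have hanti : ∀ k i, s (k + 1) i ≤ s k i := by
    intro k
    induction k with
    | zero =>
      intro i
      rw [hsucc, hs0, hPhi]
      exact min_le_right _ _
    | succ n ih =>
      intro i
      calc s (n + 1 + 1) i = Phi (s (n + 1)) i := by rw [hsucc]
        _ ≤ Phi (s n) i := hmono _ _ ih i
        _ = s (n + 1) i := by rw [hsucc]
  have hantiI : ∀ i, Antitone fun k => s k i := by
    intro i
    exact antitone_nat_of_succ_le fun k => hanti k i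
  have hbdd : ∀ i, BddBelow (Set.range fun k => s k i) := by
    intro i
    exact ⟨0, fun x ⟨k, hk⟩ => hk ▸ (hsmem k i).1⟩
  set pg : Fin N → ℝ := fun i => ⨅ k, s k i with hpg
  have htendI : ∀ i, Tendsto (fun k => s k i) atTop (nhds (pg i)) := fun i =>
    tendsto_atTop_ciInf (hantiI i) (hbdd i)
  have htend : Tendsto s atTop (nhds pg) := tendsto_pi_nhds.2 htendI
  have hpgmem : ∀ i, 0 ≤ pg i ∧ pg i ≤ pbar i := by
    intro i
    constructor
    · exact le_ciInf fun k => (hsmem k i).1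
    · exact ciInf_le_of_le (hbdd i) 0 le_rfl
  -- continuity of Phi
  have hcont : Continuous Phi := by
    rw [continuous_pi_iff]
    intro i
    have : (fun p : Fin N → ℝ => Phi p i) =
        fun p => min (∑ j, A j i * p j + e i) (pbar i) := by
      funext p; rw [hPhi, hmv]
    rw [this]
    exact ((continuous_finset_sum _ fun j _ =>
      continuous_const.mul (continuous_apply j)).add continuous_const).min continuous_const
  have hfix : Phi pg = pg := by
    have h1 : Tendsto (fun k => s (k + 1)) atTop (nhds (Phi pg)) := by
      have : (fun k => s (k + 1)) = fun k => Phi (s k) := funext hsucc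
      rw [this]
      exact (hcont.tendsto pg).comp htend
    have h2 : Tendsto (fun k => s (k + 1)) atTop (nhds pg) :=
      htend.comp (tendsto_add_atTop_nat 1)
    exact tendsto_nhds_unique h1 h2
  refine ⟨pg, hpgmem, hfix, ?_, ?_⟩
  · intro q hq hqfix i
    have hqs : ∀ k, ∀ j, q j ≤ s k j := by
      intro k
      induction k with
      | zero => exact fun j => (hq j).2
      | succ n ih =>
        intro j
        rw [hsucc]
        calc q j = Phi q j := by rw [hqfix]
          _ ≤ Phi (s n) j := hmono _ _ ih j
    exact le_ciInf fun k => hqs k i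
  · intro seq hseq0 hseqsucc
    have hseq : ∀ k, seq k = s k := by
      intro k
      induction k with
      | zero => rw [hseq0, hs0]
      | succ n ih => rw [hseqsucc, ih, hsucc]
    have : seq = s := funext hseq
    rw [this]
    exact ⟨hanti, htend⟩
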